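/- For all integers n ≥ 2 and k ≥ 2 and every integer m with 0 ≤ m ≤ n − 1, the real-number inequality (m + 1) · ((n − m + 2k − 2)/(k − 1))^(k−1) ≤ ((n + 2k − 1)/k)^k holds. -/

import Mathlib

theorem key_inequality (n k m : ℕ) (hn : 2 ≤ n) (hk : 2 ≤ k) (hm : m ≤ n - 1) :
    ((m : ℝ) + 1) * (((n : ℝ) - m + 2 * k - 2) / ((k : ℝ) - 1)) ^ (k - 1)
      ≤ (((n : ℝ) + 2 * k - 1) / (k : ℝ)) ^ k := by
  have hk2 : (2:ℝ) ≤ (k:ℝ) := by exact_mod_cast hk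
  have hn2 : (2:ℝ) ≤ (n:ℝ) := by exact_mod_cast hn
  have hkpos : (0:ℝ) < (k:ℝ) := by linarith
  have hk1pos : (0:ℝ) < (k:ℝ) - 1 := by linarith
  have hmn : (m:ℝ) ≤ (n:ℝ) - 1 := by
    have : m + 1 ≤ n := by omega
    have := (Nat.cast_le (α := ℝ)).2 this
    push_cast at this; linarith
  set a : ℝ := (m:ℝ) + 1 with ha_def
  set b : ℝ := ((n : ℝ) - m + 2 * k - 2) / ((k : ℝ) - 1) with hb_def
  set c : ℝ := ((n : ℝ) + 2 * k - 1) / (k : ℝ) with hc_def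
  have ha : (0:ℝ) ≤ a := by positivity
  have hbnum : (0:ℝ) ≤ (n : ℝ) - m + 2 * k - 2 := by linarith
  have hb : (0:ℝ) ≤ b := div_nonneg hbnum (le_of_lt hk1pos)
  have hc : (0:ℝ) ≤ c := by
    apply div_nonneg _ (le_of_lt hkpos); linarith
  -- weighted AM-GM
  have hw : (1:ℝ)/k + ((k:ℝ)-1)/k = 1 := by field_simp; ring
  have gm := Real.geom_mean_le_arith_mean2_weighted
    (by positivity : (0:ℝ) ≤ 1/k) (by positivity : (0:ℝ) ≤ ((k:ℝ)-1)/k) ha hb hw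
  have hsum : (1:ℝ)/k * a + ((k:ℝ)-1)/k * b = c := by
    rw [hb_def, hc_def, ha_def]
    field_simp
    ring
  rw [hsum] at gm
  have hpow := pow_le_pow_left₀ (by positivity) gm k
  calc a * b ^ (k - 1)
      = (a ^ ((1:ℝ)/k) * b ^ (((k:ℝ)-1)/k)) ^ k := by
        rw [mul_pow, ← Real.rpow_natCast (a ^ ((1:ℝ)/k)) k,
            ← Real.rpow_natCast (b ^ (((k:ℝ)-1)/k)) k,
            ← Real.rpow_mul ha, ← Real.rpow_mul hb,
            one_div_mul_cancel (ne_of_gt hkpos), div_mul_cancel₀ _ (ne_of_gt hkpos),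
            Real.rpow_one]
        congr 1
        rw [← Real.rpow_natCast b (k - 1)]
        congr 1
        have : ((k - 1 : ℕ) : ℝ) = (k:ℝ) - 1 := by
          have : 1 ≤ k := by omega
          push_cast [this]; ring
        rw [this]
    _ ≤ c ^ k := hpow
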